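/- Let ψ = |ψ⟩⟨ψ| be a pure state on (ℂ^d)^{⊗n} and suppose ψ = Σ_{i=1}^k x_i σ_i is a finite decomposition with x_i ∈ ℝ and each σ_i a stabilizer state. Then d^{−n} Σ_{a∈ℤ_d^{2n}} |Tr(D_a† ψ)| ≤ Σ_{i=1}^k |x_i|; consequently the Weyl–Heisenberg 1-norm of ψ lower-bounds its robustness of magic. -/

import Mathlib

open scoped BigOperators
open Matrix

noncomputable section

namespace MagicGap

/-- `ω = exp(2πi/d)`. -/
def omega (d : ℕ) : ℂ := Complex.exp (2 * Real.pi * Complex.I / d)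

/-- `τ = −exp(iπ/d)`. -/
def tau (d : ℕ) : ℂ := -Complex.exp (Real.pi * Complex.I / d)

/-- Single-qudit displacement operator `D_(a₁,a₂) = τ^{a₁a₂} X^{a₁} Z^{a₂}`,
as a `d × d` matrix: its `(j,k)` entry is `τ^{a₁a₂} ω^{a₂ k} δ_{j, k+a₁ mod d}`. -/
def D1 (d : ℕ) (a : ℤ × ℤ) : Matrix (Fin d) (Fin d) ℂ := fun j k =>
  tau d ^ (a.1 * a.2) * omega d ^ (a.2 * ((k : ℕ) : ℤ)) *
    (if ((j : ℕ) : ZMod d) = ((k : ℕ) : ZMod d) + (a.1 : ZMod d) then 1 else 0)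

/-- Multi-qudit displacement operator on `(ℂ^d)^{⊗n}`, the tensor product of
single-qudit displacement operators. -/
def D (d n : ℕ) (a : Fin n → ℤ × ℤ) :
    Matrix (Fin n → Fin d) (Fin n → Fin d) ℂ := fun j k =>
  ∏ i, D1 d (a i) (j i) (k i)

/-- The symplectic form `[a,b] = Σᵢ (a_{2i} b_{2i−1} − a_{2i−1} b_{2i})`. -/
def symp {n : ℕ} (a b : Fin n → ℤ × ℤ) : ℤ :=
  ∑ i, ((a i).2 * (b i).1 - (a i).1 * (b i).2)

/-- Standard representatives `{0,…,d−1}^{2n} ⊂ ℤ^{2n}` of `ℤ_d^{2n}`. -/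
abbrev Reps (d n : ℕ) := Fin n → Fin d × Fin d

/-- View a representative as an integer vector. -/
def toZ {d n : ℕ} (a : Reps d n) : Fin n → ℤ × ℤ :=
  fun i => ((((a i).1 : ℕ) : ℤ), (((a i).2 : ℕ) : ℤ))

/-- The group `ℤ_d^{2n}`. -/
abbrev PS (d n : ℕ) := Fin n → ZMod d × ZMod d

/-- Standard representative in `{0,…,d−1}^{2n} ⊂ ℤ^{2n}` of an element of `ℤ_d^{2n}`. -/
def repz {d n : ℕ} (a : PS d n) : Fin n → ℤ × ℤ :=
  fun i => (((a i).1.val : ℤ), ((a i).2.val : ℤ))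

/-- Fourfold tensor product `A ⊗ B ⊗ C ⊗ E` of operators on `H^{⊗4}`. -/
def tens4 {I : Type*} (A B C E : Matrix I I ℂ) :
    Matrix (Fin 4 → I) (Fin 4 → I) ℂ := fun j k =>
  A (j 0) (k 0) * B (j 1) (k 1) * C (j 2) (k 2) * E (j 3) (k 3)

/-- `A^{⊗4}`. -/
def pow4 {I : Type*} (A : Matrix I I ℂ) : Matrix (Fin 4 → I) (Fin 4 → I) ℂ :=
  tens4 A A A A

/-- `Q = d^{−2n} Σ_{a∈ℤ_d^{2n}} D_a ⊗ D_a† ⊗ D_a ⊗ D_a†`. -/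
def Q (d n : ℕ) : Matrix (Fin 4 → (Fin n → Fin d)) (Fin 4 → (Fin n → Fin d)) ℂ :=
  ((d : ℂ) ^ (2 * n))⁻¹ •
    ∑ a : Reps d n,
      tens4 (D d n (toZ a)) (D d n (toZ a))ᴴ (D d n (toZ a)) (D d n (toZ a))ᴴ

/-- The unitary `T_π` permuting the four tensor factors of `H^{⊗4}`. -/
def permOp (I : Type*) [DecidableEq I] (π : Equiv.Perm (Fin 4)) :
    Matrix (Fin 4 → I) (Fin 4 → I) ℂ := fun j k =>
  if ∀ m, j m = k (π m) then 1 else 0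

/-- `Π_{sym⁴} = (1/24) Σ_{π∈S₄} T_π`, the projector onto the symmetric subspace
of `H^{⊗4}`. -/
def piSym4 (I : Type*) [DecidableEq I] : Matrix (Fin 4 → I) (Fin 4 → I) ℂ :=
  (24 : ℂ)⁻¹ • ∑ π : Equiv.Perm (Fin 4), permOp I π

/-- A totally isotropic subgroup of `ℤ_d^{2n}`: all pairwise symplectic products
vanish mod `d`. -/
def IsIsotropic (d n : ℕ) (S : AddSubgroup (PS d n)) : Prop :=
  ∀ a ∈ S, ∀ b ∈ S, ((symp (repz a) (repz b) : ℤ) : ZMod d) = 0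

open Classical in
/-- Stabilizer projector with trivial homomorphism: `Π_𝒮 = |𝒮|⁻¹ Σ_{a∈𝒮} D_a`. -/
def stabProj (d n : ℕ) [NeZero d] (S : AddSubgroup (PS d n)) :
    Matrix (Fin n → Fin d) (Fin n → Fin d) ℂ :=
  (Nat.card S : ℂ)⁻¹ • ∑ a : PS d n, if a ∈ S then D d n (repz a) else 0

/-- `𝒮^⊥ = {a : [a,b] ≡ 0 (mod d) for all b ∈ 𝒮}`. -/
def perp (d n : ℕ) (S : AddSubgroup (PS d n)) : Set (PS d n) :=
  {a | ∀ b ∈ S, ((symp (repz a) (repz b) : ℤ) : ZMod d) = 0}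

/-- `A_𝒮 = {a ∈ ℤ_d^{2n} : 2a mod d ∈ 𝒮 and a ∈ 𝒮^⊥}`. -/
def ASet (d n : ℕ) (S : AddSubgroup (PS d n)) : Set (PS d n) :=
  {a | 2 • a ∈ S ∧ a ∈ perp d n S}

/-- The average extrinsic stabilizer-entropy of the code space of `𝒮`:
`1 − d_B · C(d_S+3,4)⁻¹ · Tr(Q Π_𝒮^{⊗4} Π_{sym⁴})`. -/
def gapBigTerm (d n : ℕ) [NeZero d] (S : AddSubgroup (PS d n)) (dS : ℕ) : ℂ :=
  1 - (d : ℂ) ^ n * ((Nat.choose (dS + 3) 4 : ℕ) : ℂ)⁻¹ *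
    trace (Q d n * pow4 (stabProj d n S) * piSym4 (Fin n → Fin d))

/-- The average intrinsic stabilizer entropy of a single qudit `ℂ^{d_S}`:
`1 − d_S · C(d_S+3,4)⁻¹ · Tr(Q_S Π^S_{sym⁴})`. -/
def smallTermQudit (dS : ℕ) : ℂ :=
  1 - (dS : ℂ) * ((Nat.choose (dS + 3) 4 : ℕ) : ℂ)⁻¹ *
    trace (Q dS 1 * piSym4 (Fin 1 → Fin dS))

/-- The average intrinsic stabilizer entropy of `m` qubits `(ℂ²)^{⊗m}`:
`1 − 2^m · C(2^m+3,4)⁻¹ · Tr(Q_S Π^S_{sym⁴})`. -/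
def smallTermQubits (m : ℕ) : ℂ :=
  1 - (2 : ℂ) ^ m * ((Nat.choose (2 ^ m + 3) 4 : ℕ) : ℂ)⁻¹ *
    trace (Q 2 m * piSym4 (Fin m → Fin 2))

open Classical in
/-- A stabilizer state on `(ℂ^d)^{⊗n}`: a rank-one orthogonal projector of the form
`σ = d^{−n} Σ_{a∈𝒮} ω^{f(a)} D_a` for a totally isotropic subgroup `𝒮 ⊆ ℤ_d^{2n}`
of order `d^n` and a group homomorphism `f : 𝒮 → ℤ_d`. -/
def IsStabilizerState (d n : ℕ) [NeZero d]
    (σ : Matrix (Fin n → Fin d) (Fin n → Fin d) ℂ) : Prop :=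
  σ * σ = σ ∧ σᴴ = σ ∧ σ.rank = 1 ∧
  ∃ (S : AddSubgroup (PS d n)) (f : PS d n → ZMod d),
    IsIsotropic d n S ∧ Nat.card S = d ^ n ∧
    (∀ a ∈ S, ∀ b ∈ S, f (a + b) = f a + f b) ∧
    σ = ((d : ℂ) ^ n)⁻¹ •
      ∑ a : PS d n, if a ∈ S then omega d ^ (f a).val • D d n (repz a) else 0

lemma omega_prim (d : ℕ) [NeZero d] : IsPrimitiveRoot (omega d) d :=
  Complex.isPrimitiveRoot_exp d (NeZero.ne d)

lemma omega_ne_zero (d : ℕ) : omega d ≠ 0 := Complex.exp_ne_zero _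
lemma tau_ne_zero (d : ℕ) : tau d ≠ 0 := neg_ne_zero.mpr (Complex.exp_ne_zero _)

lemma conj_omega (d : ℕ) : (starRingEnd ℂ) (omega d) = (omega d)⁻¹ := by
  rw [omega, ← Complex.exp_conj, ← Complex.exp_neg]
  congr 1
  rw [map_div₀, _root_.map_mul, _root_.map_mul, Complex.conj_I,
    Complex.conj_natCast, show ((2:ℂ)) = ((2:ℕ):ℂ) by norm_num, Complex.conj_natCast,
    Complex.conj_ofReal]
  push_cast
  ring

lemma conj_tau (d : ℕ) : (starRingEnd ℂ) (tau d) = (tau d)⁻¹ := by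
  rw [tau, map_neg, ← Complex.exp_conj, ← neg_inv, ← Complex.exp_neg]
  congr 2
  rw [map_div₀, _root_.map_mul, Complex.conj_I]
  simp [Complex.conj_ofReal]
  ring

lemma conj_zpow_mul_self (z : ℂ) (hz : z ≠ 0) (hc : (starRingEnd ℂ) z = z⁻¹) (e : ℤ) :
    (starRingEnd ℂ) (z ^ e) * z ^ e = 1 := by
  rw [map_zpow₀, hc, ← mul_zpow, inv_mul_cancel₀ hz, _root_.one_zpow]

lemma conj_omega_zpow_mul (d : ℕ) (e f : ℤ) :
    (starRingEnd ℂ) (omega d ^ e) * omega d ^ f = omega d ^ (f - e) := by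
  rw [map_zpow₀, conj_omega, _root_.inv_zpow, ← _root_.zpow_neg, ← zpow_add₀ (omega_ne_zero d)]
  congr 1; ring

def rep1 (d : ℕ) (b : ZMod d × ZMod d) : ℤ × ℤ := ((b.1.val : ℤ), (b.2.val : ℤ))

lemma natCast_val_cast (d : ℕ) [NeZero d] (r : ZMod d) : ((r.val : ℕ) : ZMod d) = r := by
  simp [ZMod.natCast_val, ZMod.cast_id]

lemma cast_fin_eq_iff (d : ℕ) [NeZero d] (k : Fin d) (r : ZMod d) :
    ((((k:ℕ)) : ZMod d) = r) ↔ k = ⟨r.val, ZMod.val_lt r⟩ := by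
  constructor
  · intro h
    ext
    simpa [ZMod.val_cast_of_lt k.isLt] using congrArg ZMod.val h
  · rintro rfl
    exact natCast_val_cast d r

lemma sum_indicator (d : ℕ) [NeZero d] (r : ZMod d) (g : Fin d → ℂ) :
    ∑ k : Fin d, (if (((k:ℕ)) : ZMod d) = r then g k else 0) = g ⟨r.val, ZMod.val_lt r⟩ := by
  simp only [cast_fin_eq_iff]
  simp [Finset.sum_ite_eq']

lemma omega_zpow_eq_one_iff (d : ℕ) [NeZero d] (m : ℤ) :
    omega d ^ m = 1 ↔ ((m : ℤ) : ZMod d) = 0 := by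
  rw [(omega_prim d).zpow_eq_one_iff_dvd, ZMod.intCast_zmod_eq_zero_iff_dvd]

lemma sum_omega_zpow (d : ℕ) [NeZero d] (m : ℤ) (hm : ((m : ℤ) : ZMod d) ≠ 0) :
    ∑ j : Fin d, omega d ^ (m * ((j:ℕ) : ℤ)) = 0 := by
  have hζ : omega d ^ m ≠ 1 := fun h => hm ((omega_zpow_eq_one_iff d m).mp h)
  have key : ∀ j : Fin d, omega d ^ (m * ((j:ℕ):ℤ)) = (omega d ^ m) ^ (j:ℕ) := by
    intro j
    rw [_root_.zpow_mul, zpow_natCast]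
  simp only [key]
  rw [Fin.sum_univ_eq_sum_range (fun i => (omega d ^ m) ^ i) d, geom_sum_eq hζ]
  have hpow : (omega d ^ m) ^ d = 1 := by
    rw [← zpow_natCast, ← _root_.zpow_mul, mul_comm, _root_.zpow_mul, zpow_natCast,
      (omega_prim d).pow_eq_one, _root_.one_zpow]
  rw [hpow, sub_self, zero_div]

lemma trace_D1_pair (d : ℕ) [NeZero d] (b c : ZMod d × ZMod d) :
    Matrix.trace ((D1 d (rep1 d b))ᴴ * D1 d (rep1 d c)) = if b = c then (d:ℂ) else 0 := by
  have hcast : ∀ r : ZMod d, (((r.val : ℤ)) : ZMod d) = r := by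
    intro r; rw [Int.cast_natCast]; exact natCast_val_cast d r
  have expand : Matrix.trace ((D1 d (rep1 d b))ᴴ * D1 d (rep1 d c)) =
      ∑ j : Fin d, ∑ k : Fin d,
        (starRingEnd ℂ) (D1 d (rep1 d b) k j) * D1 d (rep1 d c) k j := by
    simp [Matrix.trace, Matrix.mul_apply, Matrix.conjTranspose_apply, Matrix.diag]
  rw [expand]
  by_cases h1 : b.1 = c.1
  · -- inner conditions coincide
    have term : ∀ j k : Fin d,
        (starRingEnd ℂ) (D1 d (rep1 d b) k j) * D1 d (rep1 d c) k j =
        if (((k:ℕ)) : ZMod d) = (((j:ℕ)) : ZMod d) + b.1 then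
          ((starRingEnd ℂ) (tau d ^ ((b.1.val:ℤ) * (b.2.val:ℤ))) * tau d ^ ((c.1.val:ℤ) * (c.2.val:ℤ))) *
          ((starRingEnd ℂ) (omega d ^ ((b.2.val:ℤ) * ((j:ℕ):ℤ))) * omega d ^ ((c.2.val:ℤ) * ((j:ℕ):ℤ)))
        else 0 := by
      intro j k
      simp only [D1, rep1, hcast, h1]
      by_cases hc : (((k:ℕ)) : ZMod d) = (((j:ℕ)) : ZMod d) + c.1
      · simp only [hc, if_true, _root_.map_mul, _root_.map_one, mul_one]
        ring
      · simp [hc]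
    simp only [term]
    have inner : ∀ j : Fin d, ∑ k : Fin d,
        (if (((k:ℕ)) : ZMod d) = (((j:ℕ)) : ZMod d) + b.1 then
          ((starRingEnd ℂ) (tau d ^ ((b.1.val:ℤ) * (b.2.val:ℤ))) * tau d ^ ((c.1.val:ℤ) * (c.2.val:ℤ))) *
          ((starRingEnd ℂ) (omega d ^ ((b.2.val:ℤ) * ((j:ℕ):ℤ))) * omega d ^ ((c.2.val:ℤ) * ((j:ℕ):ℤ)))
        else 0) =
        ((starRingEnd ℂ) (tau d ^ ((b.1.val:ℤ) * (b.2.val:ℤ))) * tau d ^ ((c.1.val:ℤ) * (c.2.val:ℤ))) *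
          ((starRingEnd ℂ) (omega d ^ ((b.2.val:ℤ) * ((j:ℕ):ℤ))) * omega d ^ ((c.2.val:ℤ) * ((j:ℕ):ℤ))) := by
      intro j
      exact sum_indicator d _ _
    simp only [inner]
    by_cases h2 : b.2 = c.2
    · have hbc : b = c := Prod.ext h1 h2
      subst hbc
      rw [if_pos rfl]
      have one : ∀ j : Fin d,
          ((starRingEnd ℂ) (tau d ^ ((b.1.val:ℤ) * (b.2.val:ℤ))) * tau d ^ ((b.1.val:ℤ) * (b.2.val:ℤ))) *
          ((starRingEnd ℂ) (omega d ^ ((b.2.val:ℤ) * ((j:ℕ):ℤ))) * omega d ^ ((b.2.val:ℤ) * ((j:ℕ):ℤ))) = 1 := by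
        intro j
        rw [conj_zpow_mul_self _ (tau_ne_zero d) (conj_tau d),
          conj_zpow_mul_self _ (omega_ne_zero d) (conj_omega d), one_mul]
      simp only [one]
      simp
    · rw [if_neg (fun h => h2 (congrArg Prod.snd h))]
      have hmne : ((((c.2.val:ℤ) - (b.2.val:ℤ)) : ℤ) : ZMod d) ≠ 0 := by
        push_cast
        rw [natCast_val_cast, natCast_val_cast]
        exact sub_ne_zero.mpr (fun h => h2 h.symm)
      have hA : ∀ j : Fin d,
          (starRingEnd ℂ) (omega d ^ ((b.2.val:ℤ) * ((j:ℕ):ℤ))) * omega d ^ ((c.2.val:ℤ) * ((j:ℕ):ℤ)) =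
          omega d ^ (((c.2.val:ℤ) - (b.2.val:ℤ)) * ((j:ℕ):ℤ)) := by
        intro j
        rw [conj_omega_zpow_mul]
        congr 1
        ring
      simp only [hA, ← Finset.mul_sum, sum_omega_zpow d _ hmne, mul_zero]
  · -- conditions incompatible
    rw [if_neg (fun h => h1 (congrArg Prod.fst h))]
    refine Finset.sum_eq_zero fun j _ => Finset.sum_eq_zero fun k _ => ?_
    simp only [D1, rep1, hcast]
    by_cases hb : (((k:ℕ)) : ZMod d) = (((j:ℕ)) : ZMod d) + b.1
    · have hcnot : ¬ ((((k:ℕ)) : ZMod d) = (((j:ℕ)) : ZMod d) + c.1) := by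
        intro hcc
        exact h1 (by rw [hb] at hcc; exact (add_right_injective _ hcc))
      simp [hcnot]
    · simp [hb]

lemma sum_prod_swap (d n : ℕ) (F : Fin n → Fin d → ℂ) :
    ∑ k : Fin n → Fin d, ∏ i, F i (k i) = ∏ i, ∑ y, F i y := by
  rw [Finset.prod_univ_sum, Fintype.piFinset_univ]

lemma trace_D_pair (d n : ℕ) [NeZero d] (a b : PS d n) :
    Matrix.trace ((D d n (repz a))ᴴ * D d n (repz b)) = if a = b then ((d:ℂ))^n else 0 := by
  have expand : Matrix.trace ((D d n (repz a))ᴴ * D d n (repz b)) =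
      ∑ j : Fin n → Fin d, ∑ k : Fin n → Fin d,
        ∏ i, ((starRingEnd ℂ) (D1 d (rep1 d (a i)) (k i) (j i)) * D1 d (rep1 d (b i)) (k i) (j i)) := by
    simp only [Matrix.trace, Matrix.mul_apply, Matrix.conjTranspose_apply, Matrix.diag_apply, D]
    refine Finset.sum_congr rfl fun j _ => Finset.sum_congr rfl fun k _ => ?_
    rw [Complex.star_def, map_prod, ← Finset.prod_mul_distrib]
    rfl
  rw [expand]
  have step : ∀ j : Fin n → Fin d,
      ∑ k : Fin n → Fin d, ∏ i, ((starRingEnd ℂ) (D1 d (rep1 d (a i)) (k i) (j i)) * D1 d (rep1 d (b i)) (k i) (j i))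
      = ∏ i, ∑ y : Fin d, ((starRingEnd ℂ) (D1 d (rep1 d (a i)) y (j i)) * D1 d (rep1 d (b i)) y (j i)) := by
    intro j
    exact sum_prod_swap d n (fun i y => (starRingEnd ℂ) (D1 d (rep1 d (a i)) y (j i)) * D1 d (rep1 d (b i)) y (j i))
  simp only [step]
  rw [sum_prod_swap d n (fun i x => ∑ y : Fin d, ((starRingEnd ℂ) (D1 d (rep1 d (a i)) y x) * D1 d (rep1 d (b i)) y x))]
  have fact : ∀ i, (∑ x : Fin d, ∑ y : Fin d,
      ((starRingEnd ℂ) (D1 d (rep1 d (a i)) y x) * D1 d (rep1 d (b i)) y x))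
      = Matrix.trace ((D1 d (rep1 d (a i)))ᴴ * D1 d (rep1 d (b i))) := by
    intro i
    simp [Matrix.trace, Matrix.mul_apply, Matrix.conjTranspose_apply, Matrix.diag]
  simp only [fact, trace_D1_pair]
  by_cases hab : a = b
  · subst hab
    simp
  · rw [if_neg hab]
    obtain ⟨i, hi⟩ := Function.ne_iff.mp hab
    exact Finset.prod_eq_zero (Finset.mem_univ i) (if_neg hi)

lemma abs_omega (d : ℕ) : ‖omega d‖ = 1 := by
  have h : ((Complex.normSq (omega d) : ℝ) : ℂ) = 1 := by
    rw [← Complex.mul_conj, conj_omega, mul_inv_cancel₀ (omega_ne_zero d)]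
  have h2 : Complex.normSq (omega d) = 1 := by exact_mod_cast h
  rw [Complex.norm_def, h2, Real.sqrt_one]

def finZModEquiv (d : ℕ) [NeZero d] : Fin d ≃ ZMod d where
  toFun x := ((x : ℕ) : ZMod d)
  invFun r := ⟨r.val, ZMod.val_lt r⟩
  left_inv x := by ext; simp [ZMod.val_cast_of_lt x.isLt]
  right_inv r := natCast_val_cast d r

def repsEquiv (d n : ℕ) [NeZero d] : Reps d n ≃ PS d n :=
  Equiv.piCongrRight fun _ => Equiv.prodCongr (finZModEquiv d) (finZModEquiv d)

lemma toZ_eq (d n : ℕ) [NeZero d] (a : Reps d n) : toZ a = repz (repsEquiv d n a) := by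
  funext i
  refine Prod.ext ?_ ?_ <;>
    simp [toZ, repz, repsEquiv, finZModEquiv, Equiv.prodCongr,
      ZMod.val_cast_of_lt (a i).1.isLt, ZMod.val_cast_of_lt (a i).2.isLt]


open Classical in
lemma sum_abs_trace_stab (d n : ℕ) [NeZero d]
    (σ : Matrix (Fin n → Fin d) (Fin n → Fin d) ℂ)
    (S : AddSubgroup (PS d n)) (f : PS d n → ZMod d)
    (hcard : Nat.card S = d ^ n)
    (hform : σ = ((d : ℂ) ^ n)⁻¹ •
      ∑ a : PS d n, if a ∈ S then omega d ^ (f a).val • D d n (repz a) else 0) :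
    ∑ a : Reps d n, ‖Matrix.trace ((D d n (toZ a))ᴴ * σ)‖ = (d:ℝ)^n := by
  classical
  have hdn : ((d:ℂ))^n ≠ 0 := pow_ne_zero _ (Nat.cast_ne_zero.mpr (NeZero.ne d))
  have htr : ∀ e : PS d n, Matrix.trace ((D d n (repz e))ᴴ * σ) =
      if e ∈ S then (omega d)^(f e).val else 0 := by
    intro e
    rw [hform, Matrix.mul_smul, Matrix.trace_smul, Matrix.mul_sum, Matrix.trace_sum]
    have term : ∀ c : PS d n,
        Matrix.trace ((D d n (repz e))ᴴ * (if c ∈ S then omega d ^ (f c).val • D d n (repz c) else 0)) =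
        if c = e then (if e ∈ S then omega d ^ (f e).val * ((d:ℂ))^n else 0) else 0 := by
      intro c
      by_cases hc : c ∈ S
      · rw [if_pos hc, Matrix.mul_smul, Matrix.trace_smul, trace_D_pair]
        by_cases hce : c = e
        · subst hce
          rw [if_pos rfl, if_pos rfl, if_pos hc, smul_eq_mul]
        · rw [if_neg (fun h : e = c => hce h.symm), if_neg hce, smul_zero]
      · rw [if_neg hc, Matrix.mul_zero, Matrix.trace_zero]
        by_cases hce : c = e
        · subst hce
          rw [if_pos rfl, if_neg hc]
        · rw [if_neg hce]
    simp only [term]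
    rw [Finset.sum_ite_eq' Finset.univ e fun _ =>
      (if e ∈ S then omega d ^ (f e).val * ((d:ℂ))^n else 0), if_pos (Finset.mem_univ e)]
    by_cases he : e ∈ S
    · rw [if_pos he, if_pos he, smul_eq_mul]
      field_simp
    · rw [if_neg he, if_neg he, smul_zero]
  have habs : ∀ e : PS d n, ‖Matrix.trace ((D d n (repz e))ᴴ * σ)‖ =
      if e ∈ S then (1:ℝ) else 0 := by
    intro e
    rw [htr e]
    by_cases he : e ∈ S
    · rw [if_pos he, if_pos he, norm_pow, abs_omega, one_pow]
    · rw [if_neg he, if_neg he, norm_zero]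
  have hsum : ∑ a : Reps d n, ‖Matrix.trace ((D d n (toZ a))ᴴ * σ)‖ =
      ∑ e : PS d n, (if e ∈ S then (1:ℝ) else 0) := by
    refine Fintype.sum_equiv (repsEquiv d n) _ _ fun a => ?_
    rw [toZ_eq d n a, habs]
  rw [hsum]
  rw [Finset.sum_boole]
  have hcard2 : (Finset.univ.filter (fun e : PS d n => e ∈ S)).card = d ^ n := by
    rw [← Fintype.card_subtype, ← Nat.card_eq_fintype_card]
    exact hcard
  rw [hcard2]
  push_cast
  ring

/-- If a pure state `ψ = |ψ⟩⟨ψ|` decomposes as `ψ = Σᵢ xᵢ σᵢ` with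
real `xᵢ` and stabilizer states `σᵢ`, then
`d^{−n} Σ_a |Tr(D_a† ψ)| ≤ Σᵢ |xᵢ|`; hence the Weyl–Heisenberg 1-norm of `ψ`
lower-bounds its robustness of magic. -/
theorem WH_one_norm_le_robustness
    (d n : ℕ) [NeZero d] (hd : 2 ≤ d) (hn : 1 ≤ n)
    (ψ : Matrix (Fin n → Fin d) (Fin n → Fin d) ℂ)
    (v : (Fin n → Fin d) → ℂ) (hv : ∑ j, ‖v j‖ ^ 2 = 1)
    (hψ : ∀ j k, ψ j k = v j * star (v k))
    (k : ℕ) (x : Fin k → ℝ)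
    (σ : Fin k → Matrix (Fin n → Fin d) (Fin n → Fin d) ℂ)
    (hσ : ∀ i, IsStabilizerState d n (σ i))
    (hdecomp : ψ = ∑ i, (x i : ℂ) • σ i) :
    ((d : ℝ) ^ n)⁻¹ *
        ∑ a : Reps d n, ‖trace ((D d n (toZ a))ᴴ * ψ)‖
      ≤ ∑ i, |x i| := by
  classical
  have hstab : ∀ i, ∑ a : Reps d n, ‖trace ((D d n (toZ a))ᴴ * σ i)‖ = (d:ℝ)^n := by
    intro i
    obtain ⟨-, -, -, S, f, -, hcard, -, hform⟩ := hσ i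
    exact sum_abs_trace_stab d n (σ i) S f hcard hform
  have htri : ∀ a : Reps d n, ‖trace ((D d n (toZ a))ᴴ * ψ)‖ ≤
      ∑ i, |x i| * ‖trace ((D d n (toZ a))ᴴ * σ i)‖ := by
    intro a
    rw [hdecomp, Matrix.mul_sum, Matrix.trace_sum]
    refine le_trans (norm_sum_le _ _) (Finset.sum_le_sum fun i _ => ?_)
    rw [Matrix.mul_smul, Matrix.trace_smul, smul_eq_mul, norm_mul, Complex.norm_real, Real.norm_eq_abs]
  calc ((d:ℝ)^n)⁻¹ * ∑ a : Reps d n, ‖trace ((D d n (toZ a))ᴴ * ψ)‖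
      ≤ ((d:ℝ)^n)⁻¹ * ∑ a : Reps d n, ∑ i, |x i| * ‖trace ((D d n (toZ a))ᴴ * σ i)‖ := by
        exact mul_le_mul_of_nonneg_left (Finset.sum_le_sum fun a _ => htri a) (by positivity)
    _ = ((d:ℝ)^n)⁻¹ * ∑ i, |x i| * ∑ a : Reps d n, ‖trace ((D d n (toZ a))ᴴ * σ i)‖ := by
        rw [Finset.sum_comm]
        congr 1
        exact Finset.sum_congr rfl fun i _ => (Finset.mul_sum _ _ _).symm
    _ = ∑ i, |x i| := by
        have hdn : ((d:ℝ))^n ≠ 0 := by positivity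
        simp only [hstab]
        rw [← Finset.sum_mul, inv_mul_eq_div, mul_div_assoc, div_self hdn, mul_one]
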